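/- The number of ballot paths of length m with exactly r North steps (lattice paths from (0,0) using East and North steps such that no prefix has more North than East steps) equals C(m, r) - C(m, r-1), provided 2r ≤ m. -/

import Mathlib

open Classical in
/-- The finset of ballot paths of length `m` with `r` North steps. -/
noncomputable def BallotAux.F (m r : ℕ) : Finset (List Bool) :=
  ((Finset.univ : Finset (Fin m → Bool)).image List.ofFn).filter
    (fun l => l.count true = r ∧ ∀ s, (l.take s).count true ≤ (l.take s).count false)

namespace BallotAux

lemma length_count (l : List Bool) : l.length = l.count true + l.count false := by
  induction l with
  | nil => simp
  | cons b t ih =>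
    cases b <;> simp only [List.length_cons, List.count_cons] <;> simp <;> omega

lemma mem_F {m r : ℕ} {l : List Bool} :
    l ∈ F m r ↔ l.length = m ∧ l.count true = r ∧
      ∀ s, (l.take s).count true ≤ (l.take s).count false := by
  simp only [F, Finset.mem_filter, Finset.mem_image, Finset.mem_univ, true_and]
  constructor
  · rintro ⟨⟨f, rfl⟩, h⟩; exact ⟨by simp, h⟩
  · rintro ⟨hl, h⟩
    subst hl
    exact ⟨⟨l.get, List.ofFn_get l⟩, h⟩

lemma P_concat (l : List Bool) (b : Bool) :
    (∀ s, ((l ++ [b]).take s).count true ≤ ((l ++ [b]).take s).count false) ↔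
      ((∀ s, (l.take s).count true ≤ (l.take s).count false) ∧
        (l ++ [b]).count true ≤ (l ++ [b]).count false) := by
  constructor
  · intro h
    refine ⟨fun s => ?_, ?_⟩
    · rcases le_or_gt s l.length with hs | hs
      · have := h s
        rwa [List.take_append_of_le_length hs] at this
      · rw [List.take_of_length_le hs.le]
        have := h l.length
        rwa [List.take_append_of_le_length le_rfl, List.take_length] at this
    · have := h (l.length + 1)
      rwa [List.take_of_length_le (by simp)] at this
  · rintro ⟨h1, h2⟩ s
    rcases le_or_gt s l.length with hs | hs
    · rw [List.take_append_of_le_length hs]; exact h1 s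
    · rw [List.take_of_length_le (by simp; omega)]; exact h2

lemma F_zero (m : ℕ) : F m 0 = {List.replicate m false} := by
  ext l
  simp only [mem_F, Finset.mem_singleton]
  constructor
  · rintro ⟨hlen, hcount, -⟩
    refine (List.eq_replicate_iff.2 ⟨hlen, fun b hb => ?_⟩)
    cases b
    · rfl
    · exact absurd hb (List.count_eq_zero.1 hcount)
  · rintro rfl
    refine ⟨by simp, by simp [List.count_replicate], fun s => ?_⟩
    rw [List.take_replicate]
    simp [List.count_replicate]

lemma F_empty {m r : ℕ} (h : m < 2 * r) : F m r = ∅ := by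
  rw [Finset.eq_empty_iff_forall_notMem]
  intro l hl
  rw [mem_F] at hl
  obtain ⟨hlen, hcount, hP⟩ := hl
  have h1 := hP l.length
  rw [List.take_length] at h1
  have h2 := length_count l
  omega

lemma concat_injective (b : Bool) : Function.Injective (fun l : List Bool => l ++ [b]) :=
  fun _ _ h => by simpa using congrArg List.dropLast h

lemma filter_false (m r : ℕ) :
    (F (m + 1) r).filter (fun l => l.getLast? = some false) =
      (F m r).image (fun l => l ++ [false]) := by
  ext l
  simp only [Finset.mem_filter, Finset.mem_image, mem_F]
  constructor
  · rintro ⟨⟨hlen, hcount, hP⟩, hlast⟩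
    have hl : l.dropLast ++ [false] = l := List.dropLast_append_getLast? false hlast
    refine ⟨l.dropLast, ⟨?_, ?_, ?_⟩, hl⟩
    · rw [← hl] at hlen; simpa using hlen
    · rw [← hl] at hcount; simpa using hcount
    · rw [← hl] at hP; exact ((P_concat _ _).1 hP).1
  · rintro ⟨a, ⟨hlen, hcount, hP⟩, rfl⟩
    have hfull : (a ++ [false]).count true ≤ (a ++ [false]).count false := by
      have := hP a.length
      rw [List.take_length] at this
      simp only [List.count_append]
      simp
      omega
    exact ⟨⟨by simp [hlen], by simpa using hcount, (P_concat _ _).2 ⟨hP, hfull⟩⟩,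
      (List.getLast?_concat (l := a))⟩

lemma filter_true (m r : ℕ) (hr : 1 ≤ r) (h2 : 2 * r ≤ m + 1) :
    (F (m + 1) r).filter (fun l => l.getLast? = some true) =
      (F m (r - 1)).image (fun l => l ++ [true]) := by
  ext l
  simp only [Finset.mem_filter, Finset.mem_image, mem_F]
  constructor
  · rintro ⟨⟨hlen, hcount, hP⟩, hlast⟩
    have hl : l.dropLast ++ [true] = l := List.dropLast_append_getLast? true hlast
    refine ⟨l.dropLast, ⟨?_, ?_, ?_⟩, hl⟩
    · rw [← hl] at hlen; simpa using hlen
    · rw [← hl] at hcount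
      simp only [List.count_append] at hcount
      simp at hcount
      omega
    · rw [← hl] at hP; exact ((P_concat _ _).1 hP).1
  · rintro ⟨a, ⟨hlen, hcount, hP⟩, rfl⟩
    have hcf : a.count false = m - (r - 1) := by
      have := length_count a; omega
    have hfull : (a ++ [true]).count true ≤ (a ++ [true]).count false := by
      simp only [List.count_append]
      simp
      omega
    refine ⟨⟨by simp [hlen], ?_, (P_concat _ _).2 ⟨hP, hfull⟩⟩, (List.getLast?_concat (l := a))⟩
    simp only [List.count_append]
    simp
    omega

lemma card_F_succ (m r : ℕ) (hr : 1 ≤ r) (h2 : 2 * r ≤ m + 1) :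
    (F (m + 1) r).card = (F m r).card + (F m (r - 1)).card := by
  classical
  rw [← Finset.card_filter_add_card_filter_not
    (p := fun l : List Bool => l.getLast? = some true) (s := F (m + 1) r)]
  have hneg : (F (m + 1) r).filter (fun l => ¬ (l.getLast? = some true)) =
      (F (m + 1) r).filter (fun l => l.getLast? = some false) := by
    apply Finset.filter_congr
    intro l hl
    rw [mem_F] at hl
    have hne : l ≠ [] := List.length_pos_iff.mp (by omega)
    rw [List.getLast?_eq_getLast hne]
    cases l.getLast hne <;> simp
  rw [hneg, filter_true m r hr h2, filter_false m r,
    Finset.card_image_of_injective _ (concat_injective true),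
    Finset.card_image_of_injective _ (concat_injective false)]
  omega

lemma choose_mono_aux {n k : ℕ} (h : 2 * k + 2 ≤ n) : n.choose k ≤ n.choose (k + 1) := by
  apply Nat.choose_le_succ_of_lt_half_left
  omega

lemma card_F (m : ℕ) : ∀ r, 2 * r ≤ m + 1 →
    (F m r).card = m.choose r - (if r = 0 then 0 else m.choose (r - 1)) := by
  induction m with
  | zero =>
    intro r hr
    have : r = 0 := by omega
    subst this
    simp [F_zero]
  | succ m ih =>
    intro r hr
    rcases Nat.eq_zero_or_pos r with rfl | hrpos
    · simp [F_zero]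
    rcases le_or_gt (2 * r) (m + 1) with h1 | h1
    · obtain ⟨k, rfl⟩ : ∃ k, r = k + 1 := ⟨r - 1, by omega⟩
      rw [card_F_succ m (k + 1) (by omega) h1]
      simp only [Nat.add_sub_cancel]
      rw [ih (k + 1) h1, ih k (by omega)]
      simp only [Nat.add_sub_cancel]
      have hpascal : (m + 1).choose (k + 1) = m.choose k + m.choose (k + 1) :=
        Nat.choose_succ_succ m k
      have hble : m.choose k ≤ m.choose (k + 1) := by
        rcases le_or_gt (2 * (k + 1)) m with h | h
        · exact choose_mono_aux (by omega)
        · have hsymm : m.choose (m - (k + 1)) = m.choose (k + 1) :=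
            Nat.choose_symm (by omega)
          have hmk : m - (k + 1) = k := by omega
          rw [hmk] at hsymm
          omega
      rcases Nat.eq_zero_or_pos k with rfl | hk
      · simp only [Nat.choose_one_right, Nat.choose_zero_right] at *
        simp
        omega
      obtain ⟨j, rfl⟩ : ∃ j, k = j + 1 := ⟨k - 1, by omega⟩
      have hale : m.choose j ≤ m.choose (j + 1) := choose_mono_aux (by omega)
      have hpascal2 : (m + 1).choose (j + 1) = m.choose j + m.choose (j + 1) :=
        Nat.choose_succ_succ m j
      simp only [Nat.add_sub_cancel, Nat.succ_ne_zero, if_false]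
      omega
    · have h2 : 2 * r = m + 2 := by omega
      rw [F_empty (by omega)]
      have hsymm : (m + 1).choose (m + 1 - r) = (m + 1).choose r := Nat.choose_symm (by omega)
      have he : m + 1 - r = r - 1 := by omega
      rw [he] at hsymm
      have hne : r ≠ 0 := by omega
      simp only [hne, if_false, Finset.card_empty]
      omega

end BallotAux

/-- The number of ballot paths of length `m` with `r` North steps (words in `{N, E}`,
`N =` `true`, every prefix having at least as many `E`'s as `N`'s) is
`C(m, r) - C(m, r-1)` (with `C(m, -1) = 0`), provided `2r ≤ m`. -/
theorem ballot_path_count (m r : ℕ) (hr : 2 * r ≤ m) :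
    Nat.card {l : List Bool // l.length = m ∧ l.count true = r ∧
        ∀ s, (l.take s).count true ≤ (l.take s).count false} =
      m.choose r - if r = 0 then 0 else m.choose (r - 1) := by
  have e : {l : List Bool // l.length = m ∧ l.count true = r ∧
      ∀ s, (l.take s).count true ≤ (l.take s).count false} ≃
      {l : List Bool // l ∈ BallotAux.F m r} :=
    Equiv.subtypeEquivRight fun l => BallotAux.mem_F.symm
  rw [Nat.card_congr e, Nat.card_eq_finsetCard, BallotAux.card_F m r (by omega)]
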